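/- Let K be a field, V a K-vector space of dimension n ≥ 2, and M a 2n-dimensional subspace of symmetric bilinear forms on V in which every nonzero element has rank at least n−2. Then for every 2-dimensional subspace U of V there exists an element of M of rank exactly n−2 whose radical equals U. -/

import Mathlib

set_option maxHeartbeats 1000000 in
/-- if `M` is a `2n`-dimensional space of symmetric bilinear forms on an
`n`-dimensional space (`n ≥ 2`) in which every nonzero element has rank at least `n-2`,
then every `2`-dimensional subspace `U` of `V` is the radical of some element of `M`
of rank exactly `n-2`. -/
theorem stmt2 (K : Type*) [Field K] (V : Type*) [AddCommGroup V] [Module K V]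
    [FiniteDimensional K V] (n : ℕ) (hn : Module.finrank K V = n) (hn2 : 2 ≤ n)
    (M : Submodule K (V →ₗ[K] V →ₗ[K] K))
    (hsymm : ∀ f ∈ M, ∀ x y : V, f x y = f y x)
    (hdim : Module.finrank K ↥M = 2 * n)
    (hrank : ∀ f ∈ M, f ≠ 0 → n - 2 ≤ n - Module.finrank K (LinearMap.ker f))
    (U : Submodule K V) (hU : Module.finrank K ↥U = 2) :
    ∃ f ∈ M, f ≠ 0 ∧ n - Module.finrank K (LinearMap.ker f) = n - 2 ∧
      LinearMap.ker f = U := by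
  classical
  have b : Module.Basis (Fin 2) K U := Module.finBasisOfFinrankEq K U hU
  set u₁ : U := b 0 with hu₁
  set u₂ : U := b 1 with hu₂
  -- the restriction map
  let Ψ : ↥M →ₗ[K] (U →ₗ[K] V →ₗ[K] K) :=
    { toFun := fun f => (f : V →ₗ[K] V →ₗ[K] K).domRestrict U
      map_add' := fun f g => by ext u v; rfl
      map_smul' := fun c f => by ext u v; rfl }
  -- the antisymmetry functional
  let ψ : (U →ₗ[K] V →ₗ[K] K) →ₗ[K] K :=
    { toFun := fun g => g u₁ u₂ - g u₂ u₁
      map_add' := fun g h => by simp; ring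
      map_smul' := fun c g => by simp; ring }
  -- ψ is surjective
  have hu₂ne : (u₂ : V) ≠ 0 := by
    simpa [Submodule.coe_eq_zero] using b.ne_zero 1
  obtain ⟨φ, hφ⟩ : ∃ φ : Module.Dual K V, φ (u₂ : V) ≠ 0 := by
    by_contra h
    push_neg at h
    exact hu₂ne ((Module.forall_dual_apply_eq_zero_iff K _).1 h)
  set φ₂ : V →ₗ[K] K := (φ (u₂ : V))⁻¹ • φ with hφ₂def
  have hφ₂ : φ₂ (u₂ : V) = 1 := by
    simp [hφ₂def, inv_mul_cancel₀ hφ]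
  have hψsurj : Function.Surjective ψ := by
    intro c
    refine ⟨c • (b.coord 0).smulRight φ₂, ?_⟩
    have h1 : b.coord 0 u₁ = 1 := by simp [hu₁, Module.Basis.coord_apply]
    have h2 : b.coord 0 u₂ = 0 := by simp [hu₂, Module.Basis.coord_apply]
    simp [ψ, h1, h2, hφ₂]
  -- image of Ψ is contained in ker ψ
  have hΨker : LinearMap.range Ψ ≤ LinearMap.ker ψ := by
    rintro g ⟨f, rfl⟩
    simp only [LinearMap.mem_ker]
    show (f : V →ₗ[K] V →ₗ[K] K) u₁ u₂ - (f : V →ₗ[K] V →ₗ[K] K) u₂ u₁ = 0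
    rw [hsymm f f.2, sub_self]
  -- dimension of the target
  have hUdim : Module.finrank K (U →ₗ[K] V →ₗ[K] K) = 2 * n := by
    rw [Module.finrank_linearMap, Module.finrank_linearMap, hU, hn,
      Module.finrank_self, mul_one]
  have hψrange : Module.finrank K (LinearMap.range ψ) = 1 := by
    rw [LinearMap.range_eq_top.2 hψsurj, finrank_top, Module.finrank_self]
  have hψkerdim : Module.finrank K (LinearMap.ker ψ) = 2 * n - 1 := by
    letI : AddCommGroup (U →ₗ[K] V →ₗ[K] K) := LinearMap.addCommGroup
    have := LinearMap.finrank_range_add_finrank_ker ψ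
    rw [hψrange, hUdim] at this
    omega
  -- Ψ has nontrivial kernel
  have hΨrange : Module.finrank K (LinearMap.range Ψ) ≤ 2 * n - 1 := by
    rw [← hψkerdim]
    exact Submodule.finrank_mono hΨker
  have hΨkerpos : LinearMap.ker Ψ ≠ ⊥ := by
    intro hbot
    letI : AddCommGroup M := Submodule.addCommGroup (R := K) (M := V →ₗ[K] V →ₗ[K] K) M
    letI : AddCommGroup (U →ₗ[K] V →ₗ[K] K) := LinearMap.addCommGroup
    have := LinearMap.finrank_range_add_finrank_ker (K := K) (V := ↥M) Ψ
    rw [hbot, hdim, finrank_bot K ↥M, add_zero] at this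
    omega
  obtain ⟨f, hfker, hfne⟩ := Submodule.exists_mem_ne_zero_of_ne_bot hΨkerpos
  set F : V →ₗ[K] V →ₗ[K] K := (f : V →ₗ[K] V →ₗ[K] K) with hF
  have hFne : F ≠ 0 := by
    simpa [hF, Submodule.coe_eq_zero] using hfne
  -- U is contained in the radical
  have hUle : U ≤ LinearMap.ker F := by
    intro v hv
    have : Ψ f = 0 := hfker
    have h2 := LinearMap.congr_fun this (⟨v, hv⟩ : U)
    simpa [Ψ] using h2
  -- finish with the rank condition
  have hk2 : 2 ≤ Module.finrank K (LinearMap.ker F) := by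
    rw [← hU]; exact Submodule.finrank_mono hUle
  have hkn : Module.finrank K (LinearMap.ker F) ≤ n := by
    rw [← hn]; exact Submodule.finrank_le _
  have hr := hrank F f.2 hFne
  have hkeq : Module.finrank K (LinearMap.ker F) = 2 := by omega
  refine ⟨F, f.2, hFne, by omega, ?_⟩
  exact (Submodule.eq_of_le_of_finrank_le hUle (by rw [hkeq, hU])).symm
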